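/- Let H be a real Hilbert space, v ∈ H, and let γ : ℝ → H be differentiable with γ'(t) = v − ⟪v, γ(t)⟫·γ(t) for all t ∈ ℝ. If ‖γ(0)‖ = 1, then ‖γ(t)‖ = 1 for all t, and γ(t) lies in the linear span of {v, γ(0)} for all t. -/

import Mathlib

open scoped RealInnerProductSpace

noncomputable section

/-- A solution of the linear ODE `u' = a • u` with `u 0 = 0` is identically zero. -/
lemma zero_of_linear_ode {E : Type*} [NormedAddCommGroup E] [NormedSpace ℝ E]
    (a : ℝ → ℝ) (ha : Continuous a) (u : ℝ → E)
    (hu : ∀ t, HasDerivAt u (a t • u t) t) (h0 : u 0 = 0) : ∀ t, u t = 0 := by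
  set A : ℝ → ℝ := fun t => ∫ s in (0:ℝ)..t, a s with hA
  have hA' : ∀ t, HasDerivAt A (a t) t := fun t =>
    intervalIntegral.integral_hasDerivAt_right (ha.intervalIntegrable 0 t)
      (ha.stronglyMeasurable.stronglyMeasurableAtFilter) ha.continuousAt
  set φ : ℝ → E := fun t => Real.exp (-A t) • u t with hφ
  have hφ' : ∀ t, HasDerivAt φ 0 t := by
    intro t
    have h1 : HasDerivAt (fun t => Real.exp (-A t)) (Real.exp (-A t) * (-a t)) t :=
      ((hA' t).neg).exp
    have h2 := h1.smul (hu t)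
    convert h2 using 1
    · rfl
    rw [smul_smul]
    module
  have hconst : ∀ t, φ t = φ 0 := by
    intro t
    have hd : Differentiable ℝ φ := fun x => (hφ' x).differentiableAt
    have hz : ∀ x, deriv φ x = 0 := fun x => (hφ' x).deriv
    exact is_const_of_deriv_eq_zero hd hz t 0
  intro t
  have := hconst t
  rw [hφ] at this
  simp only [h0, smul_zero] at this
  have hne : Real.exp (-A t) ≠ 0 := Real.exp_ne_zero _
  exact (smul_eq_zero.mp this).resolve_left hne

/-- A solution of the gradient flow equation `γ' = v - ⟪v,γ⟫ • γ` starting on the unit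
sphere stays on the unit sphere and remains in the plane spanned by `v` and `γ 0`. -/
theorem gradient_flow_stays_on_sphere_and_plane
    {H : Type*} [NormedAddCommGroup H] [InnerProductSpace ℝ H]
    (v : H) (γ : ℝ → H)
    (hγ : ∀ t : ℝ, HasDerivAt γ (v - ⟪v, γ t⟫ • γ t) t)
    (h0 : ‖γ 0‖ = 1) :
    (∀ t : ℝ, ‖γ t‖ = 1) ∧
      ∀ t : ℝ, γ t ∈ Submodule.span ℝ ({v, γ 0} : Set H) := by
  have hγd : Differentiable ℝ γ := fun t => (hγ t).differentiableAt
  have hγc : Continuous γ := hγd.continuous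
  have hac : Continuous fun t => ⟪v, γ t⟫ :=
    (continuous_const.inner hγc)
  constructor
  · -- part 1: consider u t = 1 - ⟪γ t, γ t⟫, which satisfies u' = (-2⟪v,γ⟫) • u
    set u : ℝ → ℝ := fun t => 1 - ⟪γ t, γ t⟫ with hu
    have hu' : ∀ t, HasDerivAt u ((-2 * ⟪v, γ t⟫) • u t) t := by
      intro t
      have h1 := ((hγ t).inner ℝ (hγ t))
      have h2 := (hasDerivAt_const t (1:ℝ)).sub h1
      convert h2 using 1
      · rfl
      · rfl
      · rfl
      simp only [hu, inner_sub_left, inner_sub_right, real_inner_smul_left,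
        real_inner_smul_right, real_inner_comm (γ t) v, smul_eq_mul]
      ring
    have hz := zero_of_linear_ode (fun t => -2 * ⟪v, γ t⟫)
      (by continuity) u hu' (by simp [hu, real_inner_self_eq_norm_sq, h0])
    intro t
    have ht : (1:ℝ) - ⟪γ t, γ t⟫ = 0 := hz t
    have : ⟪γ t, γ t⟫ = 1 := by linarith
    have hsq : ‖γ t‖ ^ 2 = 1 := by rw [← real_inner_self_eq_norm_sq, this]
    nlinarith [norm_nonneg (γ t)]
  · -- part 2: let W be the span, P the orthogonal projection; u = γ - P γ satisfies
    -- u' = (-⟪v,γ⟫) • u with u 0 = 0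
    set W : Submodule ℝ H := Submodule.span ℝ ({v, γ 0} : Set H) with hW
    have hfin : FiniteDimensional ℝ W :=
      FiniteDimensional.span_of_finite ℝ (Set.toFinite _)
    have : CompleteSpace W := FiniteDimensional.complete ℝ W
    set L : H →L[ℝ] H := W.subtypeL.comp (W.orthogonalProjection) with hL
    have hvW : v ∈ W := Submodule.subset_span (by simp)
    have hg0W : γ 0 ∈ W := Submodule.subset_span (by simp)
    have hLv : L v = v := by
      simp only [hL, ContinuousLinearMap.comp_apply, Submodule.subtypeL_apply]
      exact Submodule.starProjection_eq_self_iff.mpr hvW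
    set u : ℝ → H := fun t => γ t - L (γ t) with hu
    have hu' : ∀ t, HasDerivAt u ((-⟪v, γ t⟫) • u t) t := by
      intro t
      have h1 : HasDerivAt (fun t => L (γ t)) (L (v - ⟪v, γ t⟫ • γ t)) t :=
        (L.hasFDerivAt.comp_hasDerivAt t (hγ t))
      have h2 := (hγ t).sub h1
      convert h2 using 1
      · rfl
      simp only [hu, map_sub, map_smul, hLv]
      module
    have hu0 : u 0 = 0 := by
      simp only [hu, sub_eq_zero, hL, ContinuousLinearMap.comp_apply,
        Submodule.subtypeL_apply]
      exact (Submodule.starProjection_eq_self_iff.mpr hg0W).symm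
    have hz := zero_of_linear_ode (fun t => -⟪v, γ t⟫) (by continuity) u hu' hu0
    intro t
    have := hz t
    rw [hu, sub_eq_zero] at this
    rw [this]
    exact (W.orthogonalProjection (γ t)).2
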